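/- If a reflection t appears as a coordinate of the label of some maximal chain of an interval [u, v] in NC_W(γ), then t = u⁻¹u' for some element u' with u' covering u in [u, v]. -/

import Mathlib

open scoped RealInnerProductSpace
open Module

noncomputable section

variable {V : Type*} [NormedAddCommGroup V] [InnerProductSpace ℝ V]

/-- `g` acts as the orthogonal reflection in the hyperplane orthogonal to `α`. -/
def reflFormula (α : V) (g : V ≃ₗᵢ[ℝ] V) : Prop :=
  ∀ v, g v = v - (2 * ⟪α, v⟫ / ⟪α, α⟫) • α

/-- `g` is an orthogonal reflection. -/
def IsReflection (g : V ≃ₗᵢ[ℝ] V) : Prop :=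
  ∃ α : V, α ≠ 0 ∧ reflFormula α g

/-- A finite real reflection group: a finite subgroup of the orthogonal group
generated by its reflections. -/
def IsReflectionGroup (W : Subgroup (V ≃ₗᵢ[ℝ] V)) : Prop :=
  Finite W ∧ Subgroup.closure {g | g ∈ W ∧ IsReflection g} = W

/-- Reflection length: the least `k` such that `w` is a product of `k` reflections. -/
def refLen (W : Subgroup (V ≃ₗᵢ[ℝ] V)) (w : W) : ℕ :=
  sInf {k | ∃ l : List W, l.length = k ∧ (∀ t ∈ l, IsReflection (t : W).1) ∧ l.prod = w}

/-- The absolute order on `W`. -/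
def absLe (W : Subgroup (V ≃ₗᵢ[ℝ] V)) (u v : W) : Prop :=
  refLen W u + refLen W (u⁻¹ * v) = refLen W v

/-- Covering relation of the absolute order. -/
def covers (W : Subgroup (V ≃ₗᵢ[ℝ] V)) (u v : W) : Prop :=
  absLe W u v ∧ u ≠ v ∧ ∀ z, absLe W u z → absLe W z v → z = u ∨ z = v

/-- The fixed subspace of an isometry. -/
def fixedSpace (g : V ≃ₗᵢ[ℝ] V) : Submodule ℝ V where
  carrier := {v | g v = v}
  add_mem' := by
    intro a b ha hb
    simp only [Set.mem_setOf_eq, map_add] at *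
    rw [ha, hb]
  zero_mem' := by simp
  smul_mem' := by
    intro c a ha
    simp only [Set.mem_setOf_eq, map_smul] at *
    rw [ha]

/-- A root system for the reflection group `W`. -/
def IsRootSystemFor (W : Subgroup (V ≃ₗᵢ[ℝ] V)) (Φ : Set V) : Prop :=
  Φ.Finite ∧ (∀ α ∈ Φ, α ≠ 0) ∧ (∀ α ∈ Φ, -α ∈ Φ) ∧
  (∀ α ∈ Φ, ∀ c : ℝ, c • α ∈ Φ → c = 1 ∨ c = -1) ∧
  (∀ α ∈ Φ, ∃ t ∈ W, reflFormula α t) ∧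
  (∀ t ∈ W, IsReflection t → ∃ α ∈ Φ, reflFormula α t) ∧
  (∀ g ∈ W, ∀ α ∈ Φ, g α ∈ Φ)

/-- A simple system for `Φ`: roots `σ 1, …, σ ℓ` which are linearly independent and
such that every root is a nonnegative or nonpositive combination of them. -/
def IsSimpleSystem (Φ : Set V) {ℓ : ℕ} (σ : Fin ℓ → V) : Prop :=
  (∀ i, σ i ∈ Φ) ∧ LinearIndependent ℝ σ ∧
  ∀ α ∈ Φ, (∃ c : Fin ℓ → ℝ, (∀ i, 0 ≤ c i) ∧ α = ∑ i, c i • σ i) ∨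
           (∃ c : Fin ℓ → ℝ, (∀ i, 0 ≤ c i) ∧ -α = ∑ i, c i • σ i)

/-- `γ` is a Coxeter element of `W`: a product, in some order, of the reflections in
the `ℓ` simple roots of some simple system of the root system `Φ`. -/
def IsCoxeterElement (W : Subgroup (V ≃ₗᵢ[ℝ] V)) (Φ : Set V) (ℓ : ℕ) (γ : W) : Prop :=
  ∃ σ : Fin ℓ → V, IsSimpleSystem Φ σ ∧
    ∃ t : Fin ℓ → W, (∀ i, reflFormula (σ i) (t i).1) ∧
      ∃ l : List (Fin ℓ), l.Nodup ∧ (∀ i, i ∈ l) ∧ (l.map t).prod = γ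

/-- `l` is a maximal (saturated) chain from `u` to `v` in the absolute order. -/
def IsMaximalChain (W : Subgroup (V ≃ₗᵢ[ℝ] V)) (u v : W) (l : List W) : Prop :=
  l.head? = some u ∧ l.getLast? = some v ∧ l.Chain' (covers W)

/-- The label of a chain under the natural edge labeling `λ (x, y) = x⁻¹ * y`. -/
def chainLabels (W : Subgroup (V ≃ₗᵢ[ℝ] V)) (l : List W) : List W :=
  l.zipWith (fun x y => x⁻¹ * y) l.tail

end

section AuxLemmas

variable {V : Type*} [NormedAddCommGroup V] [InnerProductSpace ℝ V]

lemma IsReflection.ne_one' {g : V ≃ₗᵢ[ℝ] V} (hg : IsReflection g) : g ≠ 1 := by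
  obtain ⟨α, hα, hf⟩ := hg
  intro h
  have h0 : ⟪α, α⟫ ≠ 0 := inner_self_ne_zero.mpr hα
  have hα2 := hf α
  rw [h] at hα2
  simp only [LinearIsometryEquiv.coe_one, id_eq] at hα2
  have hc : 2 * ⟪α, α⟫ / ⟪α, α⟫ = 2 := by field_simp
  rw [hc] at hα2
  have h2 : (2 : ℝ) • α = 0 := by
    have := hα2
    rw [eq_sub_iff_add_eq] at this
    have h3 : (2 : ℝ) • α + α = α := by rw [add_comm]; exact this
    exact (add_eq_right).mp h3
  rcases smul_eq_zero.mp h2 with h | h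
  · norm_num at h
  · exact hα h

lemma IsReflection.mul_self' {g : V ≃ₗᵢ[ℝ] V} (hg : IsReflection g) : g * g = 1 := by
  obtain ⟨α, hα, hf⟩ := hg
  have h0 : ⟪α, α⟫ ≠ 0 := inner_self_ne_zero.mpr hα
  ext v
  have h1 : ⟪α, g v⟫ = -⟪α, v⟫ := by
    rw [hf v, inner_sub_right, real_inner_smul_right]
    field_simp
    ring
  simp only [LinearIsometryEquiv.coe_mul, Function.comp_apply, LinearIsometryEquiv.coe_one, id_eq]
  rw [hf (g v), h1, hf v]
  have h2 : 2 * -⟪α, v⟫ / ⟪α, α⟫ = -(2 * ⟪α, v⟫ / ⟪α, α⟫) := by ring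
  rw [h2, neg_smul]
  abel

lemma IsReflection.conj' {s : V ≃ₗᵢ[ℝ] V} (hs : IsReflection s) (g : V ≃ₗᵢ[ℝ] V) :
    IsReflection (g * s * g⁻¹) := by
  obtain ⟨α, hα, hf⟩ := hs
  have hgα : g α ≠ 0 := fun h => hα (g.injective (by rw [h, map_zero]))
  refine ⟨g α, hgα, fun v => ?_⟩
  have hginv : ∀ w : V, g (g⁻¹ w) = w := by
    intro w; simp
  show (g * s * g⁻¹) v = _
  simp only [LinearIsometryEquiv.coe_mul, Function.comp_apply]
  rw [show (g⁻¹ : V ≃ₗᵢ[ℝ] V) v = g.symm v from rfl]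
  rw [hf (g.symm v), map_sub, map_smul, g.apply_symm_apply]
  have e1 : ⟪g α, v⟫ = ⟪α, g.symm v⟫ := by
    conv_lhs => rw [← g.apply_symm_apply v]
    exact g.inner_map_map α (g.symm v)
  have e2 : ⟪g α, g α⟫ = ⟪α, α⟫ := g.inner_map_map α α
  rw [e1, e2]

variable (W : Subgroup (V ≃ₗᵢ[ℝ] V))

lemma refl_inv_eq {t : W} (ht : IsReflection (t : W).1) : t⁻¹ = t := by
  have h : t * t = 1 := by
    apply Subtype.ext
    simpa using ht.mul_self'
  exact inv_eq_of_mul_eq_one_right h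

lemma refl_ne_one {t : W} (ht : IsReflection (t : W).1) : t ≠ 1 := by
  intro h
  exact ht.ne_one' (by rw [h]; rfl)

lemma exists_refl_word (hW : IsReflectionGroup W) (w : W) :
    ∃ l : List W, (∀ t ∈ l, IsReflection (t : W).1) ∧ l.prod = w := by
  have hw : (w : V ≃ₗᵢ[ℝ] V) ∈ Subgroup.closure {g | g ∈ W ∧ IsReflection g} := by
    rw [hW.2]; exact w.2
  have main : ∀ (g : V ≃ₗᵢ[ℝ] V) (_ : g ∈ Subgroup.closure {g | g ∈ W ∧ IsReflection g}),
      ∀ (hgW : g ∈ W), ∃ l : List W, (∀ t ∈ l, IsReflection (t : W).1) ∧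
        l.prod = ⟨g, hgW⟩ := by
    intro g hg
    induction hg using Subgroup.closure_induction with
    | mem x hx =>
      intro hgW
      exact ⟨[⟨x, hgW⟩], by simpa using hx.2, by simp⟩
    | one =>
      intro h1
      exact ⟨[], by simp, rfl⟩
    | mul x y hx hy ihx ihy =>
      intro hxyW
      have hxW : x ∈ W := by rw [← hW.2]; exact hx
      have hyW : y ∈ W := by rw [← hW.2]; exact hy
      obtain ⟨lx, hlx, hpx⟩ := ihx hxW
      obtain ⟨ly, hly, hpy⟩ := ihy hyW
      refine ⟨lx ++ ly, ?_, ?_⟩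
      · intro t htl
        rcases List.mem_append.mp htl with h | h
        · exact hlx t h
        · exact hly t h
      · rw [List.prod_append, hpx, hpy]; rfl
    | inv x hx ih =>
      intro hxW
      have hxW' : x ∈ W := by rw [← hW.2]; exact hx
      obtain ⟨l, hl, hp⟩ := ih hxW'
      refine ⟨(l.map fun t => t⁻¹).reverse, ?_, ?_⟩
      · intro t htl
        rw [List.mem_reverse, List.mem_map] at htl
        obtain ⟨s, hs, rfl⟩ := htl
        rw [refl_inv_eq W (hl s hs)]
        exact hl s hs
      · rw [← List.prod_inv_reverse, hp]; rfl
  exact main w hw w.2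

lemma refLen_spec (hW : IsReflectionGroup W) (w : W) :
    ∃ l : List W, l.length = refLen W w ∧ (∀ t ∈ l, IsReflection (t : W).1) ∧ l.prod = w := by
  have hne : {k | ∃ l : List W, l.length = k ∧ (∀ t ∈ l, IsReflection (t : W).1) ∧
      l.prod = w}.Nonempty := by
    obtain ⟨l, h1, h2⟩ := exists_refl_word W hW w
    exact ⟨l.length, l, rfl, h1, h2⟩
  exact Nat.sInf_mem hne

lemma refLen_le (w : W) {l : List W} (hl : ∀ t ∈ l, IsReflection (t : W).1)
    (hp : l.prod = w) : refLen W w ≤ l.length :=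
  Nat.sInf_le ⟨l, rfl, hl, hp⟩

lemma refLen_one : refLen W 1 = 0 :=
  Nat.le_zero.mp (refLen_le W 1 (l := []) (by simp) (by simp))

lemma eq_one_of_refLen_zero (hW : IsReflectionGroup W) {w : W} (h : refLen W w = 0) :
    w = 1 := by
  obtain ⟨l, hlen, _, hp⟩ := refLen_spec W hW w
  rw [h, List.length_eq_zero_iff] at hlen
  rw [hlen] at hp
  simpa using hp.symm

lemma refLen_mul_le (hW : IsReflectionGroup W) (a b : W) :
    refLen W (a * b) ≤ refLen W a + refLen W b := by
  obtain ⟨la, halen, har, hap⟩ := refLen_spec W hW a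
  obtain ⟨lb, hblen, hbr, hbp⟩ := refLen_spec W hW b
  have := refLen_le W (a * b) (l := la ++ lb) (by
    intro t ht; rcases List.mem_append.mp ht with h | h
    · exact har t h
    · exact hbr t h) (by rw [List.prod_append, hap, hbp])
  simpa [halen, hblen] using this

lemma refLen_triangle (hW : IsReflectionGroup W) (u v : W) :
    refLen W v ≤ refLen W u + refLen W (u⁻¹ * v) := by
  have := refLen_mul_le W hW u (u⁻¹ * v)
  rwa [mul_inv_cancel_left] at this

lemma refLen_reflection (hW : IsReflectionGroup W) {t : W} (ht : IsReflection (t : W).1) :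
    refLen W t = 1 := by
  have h1 : refLen W t ≤ 1 := refLen_le W t (l := [t]) (by simpa using ht) (by simp)
  have h0 : refLen W t ≠ 0 := fun h => refl_ne_one W ht (eq_one_of_refLen_zero W hW h)
  omega

lemma reflection_of_refLen_one (hW : IsReflectionGroup W) {w : W}
    (h : refLen W w = 1) : IsReflection (w : W).1 := by
  obtain ⟨l, hlen, hl, hp⟩ := refLen_spec W hW w
  rw [h, List.length_eq_one_iff] at hlen
  obtain ⟨s, rfl⟩ := hlen
  simp only [List.prod_cons, List.prod_nil, mul_one] at hp
  rw [← hp]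
  exact hl s (by simp)

lemma absLe_refl' (w : W) : absLe W w w := by
  show refLen W w + refLen W (w⁻¹ * w) = refLen W w
  rw [inv_mul_cancel, refLen_one, add_zero]

lemma absLe_trans' (hW : IsReflectionGroup W) {a b c : W}
    (h1 : absLe W a b) (h2 : absLe W b c) : absLe W a c := by
  have e1 : refLen W a + refLen W (a⁻¹ * b) = refLen W b := h1
  have e2 : refLen W b + refLen W (b⁻¹ * c) = refLen W c := h2
  have t1 : refLen W c ≤ refLen W a + refLen W (a⁻¹ * c) := refLen_triangle W hW a c
  have t2 : refLen W (a⁻¹ * c) ≤ refLen W (a⁻¹ * b) + refLen W (b⁻¹ * c) := by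
    have := refLen_mul_le W hW (a⁻¹ * b) (b⁻¹ * c)
    rwa [mul_assoc, mul_inv_cancel_left] at this
  show refLen W a + refLen W (a⁻¹ * c) = refLen W c
  omega

/-- Core step: if `t` is a reflection starting some reduced factorization of `u⁻¹v`,
then `u*t` covers `u` and lies below `v`. -/
lemma interval_step (hW : IsReflectionGroup W) (u v : W) (huv : absLe W u v)
    (t : W) (htr : IsReflection (t : W).1)
    (l : List W) (hl : ∀ s ∈ l, IsReflection (s : W).1)
    (hlen : l.length + 1 = refLen W (u⁻¹ * v)) (hprod : t * l.prod = u⁻¹ * v) :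
    covers W u (u * t) ∧ absLe W (u * t) v ∧ refLen W (u * t) = refLen W u + 1 := by
  have huv' : refLen W u + refLen W (u⁻¹ * v) = refLen W v := huv
  have hrt : refLen W t = 1 := refLen_reflection W hW htr
  have hup_le : refLen W (u * t) ≤ refLen W u + 1 := by
    have := refLen_mul_le W hW u t
    omega
  have hrw : (u * t)⁻¹ * v = l.prod := by
    rw [mul_inv_rev, mul_assoc, ← hprod, inv_mul_cancel_left]
  have hrest : refLen W ((u * t)⁻¹ * v) ≤ l.length := by
    rw [hrw]; exact refLen_le W l.prod hl rfl
  have tri : refLen W v ≤ refLen W (u * t) + refLen W ((u * t)⁻¹ * v) :=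
    refLen_triangle W hW (u * t) v
  have hup : refLen W (u * t) = refLen W u + 1 := by omega
  have hrest' : refLen W ((u * t)⁻¹ * v) = l.length := by omega
  have hlab : u⁻¹ * (u * t) = t := by rw [inv_mul_cancel_left]
  have habs1 : absLe W u (u * t) := by
    show refLen W u + refLen W (u⁻¹ * (u * t)) = refLen W (u * t)
    rw [hlab, hrt, hup]
  have habs2 : absLe W (u * t) v := by
    show refLen W (u * t) + refLen W ((u * t)⁻¹ * v) = refLen W v
    omega
  refine ⟨⟨habs1, ?_, ?_⟩, habs2, hup⟩
  · intro h
    have : t = 1 := by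
      have := congrArg (fun z => u⁻¹ * z) h
      simpa using this.symm
    rw [this, refLen_one W] at hrt
    omega
  · intro z hz1 hz2
    have e1 : refLen W u + refLen W (u⁻¹ * z) = refLen W z := hz1
    have e2 : refLen W z + refLen W (z⁻¹ * (u * t)) = refLen W (u * t) := hz2
    have : refLen W (u⁻¹ * z) = 0 ∨ refLen W (z⁻¹ * (u * t)) = 0 := by omega
    rcases this with h | h
    · left
      have := eq_one_of_refLen_zero W hW h
      rw [inv_mul_eq_one] at this
      exact this.symm
    · right
      have := eq_one_of_refLen_zero W hW h
      rw [inv_mul_eq_one] at this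
      exact this

lemma cover_label (hW : IsReflectionGroup W) {x y : W} (h : covers W x y) :
    refLen W (x⁻¹ * y) = 1 := by
  obtain ⟨hxy, hne, hmax⟩ := h
  obtain ⟨l, hlen, hl, hp⟩ := refLen_spec W hW (x⁻¹ * y)
  cases l with
  | nil =>
    exfalso
    simp only [List.prod_nil] at hp
    exact hne (by rwa [eq_comm, inv_mul_eq_one] at hp)
  | cons t l' =>
    have htr : IsReflection (t : W).1 := hl t (by simp)
    have hstep := interval_step W hW x y hxy t htr l'
      (fun s hs => hl s (List.mem_cons_of_mem _ hs))
      (by simpa using hlen) (by simpa using hp)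
    obtain ⟨hcov, hle, _⟩ := hstep
    rcases hmax (x * t) hcov.1 hle with h | h
    · exact absurd h.symm hcov.2.1
    · rw [← h, inv_mul_cancel_left]
      exact refLen_reflection W hW htr

lemma conj_prod (t : W) : ∀ a : List W,
    (a.map fun s => t⁻¹ * s * t).prod = t⁻¹ * a.prod * t
  | [] => by simp
  | r :: a => by
    simp only [List.map_cons, List.prod_cons, conj_prod t a]
    group

lemma refl_shuffle (t : W) (l : List W) (hl : ∀ s ∈ l, IsReflection (s : W).1)
    (htl : t ∈ l) :
    ∃ l' : List W, l'.length + 1 = l.length ∧ (∀ s ∈ l', IsReflection (s : W).1) ∧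
      t * l'.prod = l.prod := by
  obtain ⟨a, b, rfl⟩ := List.append_of_mem htl
  refine ⟨a.map (fun s => t⁻¹ * s * t) ++ b, by simp; omega, ?_, ?_⟩
  · intro s hs
    rcases List.mem_append.mp hs with h | h
    · rw [List.mem_map] at h
      obtain ⟨r, hr, rfl⟩ := h
      have hrr : IsReflection (r : W).1 := hl r (by simp [hr])
      have := hrr.conj' ((t : W).1)⁻¹
      rw [inv_inv] at this
      simpa using this
    · exact hl s (by simp [h])
  · rw [List.prod_append, List.prod_append, List.prod_cons, conj_prod W t a]
    group

lemma chain_absLe (hW : IsReflectionGroup W) :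
    ∀ (l : List W) (u v : W), l.Chain' (covers W) → l.head? = some u →
      l.getLast? = some v → absLe W u v := by
  intro l
  induction l with
  | nil => intro u v _ hh _; simp at hh
  | cons a l ih =>
    intro u v hc hh hlast
    obtain rfl : a = u := by simpa using hh
    cases l with
    | nil =>
      obtain rfl : a = v := by simpa using hlast
      exact absLe_refl' W a
    | cons b l' =>
      have hcov : covers W a b := (List.isChain_cons_cons.mp hc).1
      have hrest := ih b v (List.isChain_cons_cons.mp hc).2 rfl
        (by rwa [List.getLast?_cons_cons] at hlast)
      exact absLe_trans' W hW hcov.1 hrest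

lemma labels_extract (hW : IsReflectionGroup W) :
    ∀ (l : List W) (u v : W), l.Chain' (covers W) → l.head? = some u →
      l.getLast? = some v → ∀ t ∈ chainLabels W l,
      ∃ x y : W, absLe W u x ∧ covers W x y ∧ absLe W y v ∧ x⁻¹ * y = t := by
  intro l
  induction l with
  | nil => intro u v _ _ _ t ht; simp [chainLabels] at ht
  | cons a l ih =>
    intro u v hc hh hlast t ht
    obtain rfl : a = u := by simpa using hh
    cases l with
    | nil => simp [chainLabels] at ht
    | cons b l' =>
      have hcov : covers W a b := (List.isChain_cons_cons.mp hc).1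
      have hc' : (b :: l').Chain' (covers W) := (List.isChain_cons_cons.mp hc).2
      have hlast' : (b :: l').getLast? = some v := by
        rwa [List.getLast?_cons_cons] at hlast
      have hcl : chainLabels W (a :: b :: l') = (a⁻¹ * b) :: chainLabels W (b :: l') := rfl
      rw [hcl, List.mem_cons] at ht
      rcases ht with rfl | ht
      · exact ⟨a, b, absLe_refl' W a, hcov,
          chain_absLe W hW (b :: l') b v hc' rfl hlast', rfl⟩
      · obtain ⟨x, y, hx, hxy, hy, heq⟩ := ih b v hc' rfl hlast' t ht
        exact ⟨x, y, absLe_trans' W hW hcov.1 hx, hxy, hy, heq⟩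

end AuxLemmas

/-- If a reflection `t` appears as a coordinate of the label of some maximal chain of
an interval `[u, v]` in `NC_W(γ)`, then `t = u⁻¹ * u'` for some `u'` covering `u`
in `[u, v]`. -/
theorem statement9 {V : Type*} [NormedAddCommGroup V] [InnerProductSpace ℝ V]
    [FiniteDimensional ℝ V]
    (W : Subgroup (V ≃ₗᵢ[ℝ] V)) (hW : IsReflectionGroup W)
    (Φ : Set V) (hΦ : IsRootSystemFor W Φ)
    (γ : W) (hγ : IsCoxeterElement W Φ (Module.finrank ℝ V) γ)
    (u v : W) (huv : absLe W u v) (hvγ : absLe W v γ)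
    (l : List W) (hl : IsMaximalChain W u v l)
    (t : W) (ht : t ∈ chainLabels W l) :
    ∃ u' : W, covers W u u' ∧ absLe W u' v ∧ u⁻¹ * u' = t := by
  obtain ⟨hh, hlast, hch⟩ := hl
  obtain ⟨x, y, hux, hxy, hyv, hlabel⟩ := labels_extract W hW l u v hch hh hlast t ht
  have hr1 : refLen W (x⁻¹ * y) = 1 := cover_label W hW hxy
  have hrt : refLen W t = 1 := by rw [← hlabel]; exact hr1
  have htr : IsReflection (t : W).1 := by
    rw [← hlabel]; exact reflection_of_refLen_one W hW hr1
  obtain ⟨la, halen, har, hap⟩ := refLen_spec W hW (u⁻¹ * x)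
  obtain ⟨lb, hblen, hbr, hbp⟩ := refLen_spec W hW (y⁻¹ * v)
  have hfull_refl : ∀ s ∈ la ++ t :: lb, IsReflection (s : W).1 := by
    intro s hs
    rcases List.mem_append.mp hs with h | h
    · exact har s h
    · rcases List.mem_cons.mp h with rfl | h
      · exact htr
      · exact hbr s h
  have hfullprod : (la ++ t :: lb).prod = u⁻¹ * v := by
    rw [List.prod_append, List.prod_cons, hap, hbp, ← hlabel]
    group
  have e_uv : refLen W u + refLen W (u⁻¹ * v) = refLen W v := huv
  have e_ux : refLen W u + refLen W (u⁻¹ * x) = refLen W x := hux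
  have e_xy : refLen W x + refLen W (x⁻¹ * y) = refLen W y := hxy.1
  have e_yv : refLen W y + refLen W (y⁻¹ * v) = refLen W v := hyv
  have hk : refLen W (u⁻¹ * v) = la.length + 1 + lb.length := by omega
  obtain ⟨l', hlen', hl', hprod'⟩ := refl_shuffle W t (la ++ t :: lb) hfull_refl (by simp)
  have hfulllen : (la ++ t :: lb).length = la.length + 1 + lb.length := by
    simp [List.length_append]; omega
  have hfac : l'.length + 1 = refLen W (u⁻¹ * v) := by omega
  have hstep := interval_step W hW u v huv t htr l' hl' hfac (hprod'.trans hfullprod)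
  exact ⟨u * t, hstep.1, hstep.2.1, by rw [inv_mul_cancel_left]⟩
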